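/- Let R ∈ ℝ^{n×m} be the incidence matrix of a connected directed graph with n vertices and m links and no self-loops, let G ∈ ℝ^{n×n}, H ∈ ℝ^{m×m}, D ∈ ℝ^{m×m} be diagonal matrices with strictly positive diagonal entries, and A = [[0, −G⁻¹R], [H⁻¹Rᵀ, −H⁻¹D]]. Then for every integer k ≥ 1, Ker(Aᵏ) = {(c𝟙, 0) : c ∈ ℝ}; consequently the generalized eigenspace of A for the eigenvalue 0 is one-dimensional (0 is an eigenvalue of algebraic multiplicity one), spanned by (𝟙, 0). -/

import Mathlib

open Matrix

/-- `R` is the incidence matrix of a directed graph with no self-loops. -/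
def IsIncidence {n m : ℕ} (R : Matrix (Fin n) (Fin m) ℝ) : Prop :=
  ∀ j : Fin m, ∃ a b : Fin n, a ≠ b ∧ R a j = 1 ∧ R b j = -1 ∧
    ∀ i : Fin n, i ≠ a → i ≠ b → R i j = 0

/-- The simple graph on the vertices in which `a` and `b` are adjacent whenever
some link has `(a, b)` as its tail–head pair. -/
def IncidenceGraph {n m : ℕ} (R : Matrix (Fin n) (Fin m) ℝ) : SimpleGraph (Fin n) :=
  SimpleGraph.fromRel (fun a b => ∃ j : Fin m, R a j = 1 ∧ R b j = -1)

section Aux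

variable {n m : ℕ} (R : Matrix (Fin n) (Fin m) ℝ)

lemma sum_R_mul {j : Fin m} {a b : Fin n} (hab : a ≠ b) (ha : R a j = 1)
    (hb : R b j = -1) (h0 : ∀ i : Fin n, i ≠ a → i ≠ b → R i j = 0) (u : Fin n → ℝ) :
    ∑ i, R i j * u i = u a - u b := by
  have key : ∀ i, R i j * u i = (if a = i then u i else 0) + (if b = i then -u i else 0) := by
    intro i
    by_cases h1 : i = a
    · subst h1; rw [ha]; simp [Ne.symm hab]
    · by_cases h2 : i = b
      · subst h2; rw [hb]; simp [hab]
      · rw [h0 i h1 h2]; simp [Ne.symm h1, Ne.symm h2]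
  rw [Finset.sum_congr rfl fun i _ => key i, Finset.sum_add_distrib,
    Finset.sum_ite_eq, Finset.sum_ite_eq]
  simp [sub_eq_add_neg]

lemma transpose_mulVec_apply (u : Fin n → ℝ) (j : Fin m) :
    (Rᵀ *ᵥ u) j = ∑ i, R i j * u i := by
  simp [mulVec, dotProduct, transpose_apply]

lemma col_sum (hR : IsIncidence R) (j : Fin m) :
    (Rᵀ *ᵥ (fun _ => (1:ℝ))) j = 0 := by
  obtain ⟨a, b, hab, ha, hb, h0⟩ := hR j
  rw [transpose_mulVec_apply, sum_R_mul R hab ha hb h0]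
  ring

lemma edge_eq (hR : IsIncidence R) {j : Fin m} {a b : Fin n} (ha : R a j = 1)
    (hb : R b j = -1) (u : Fin n → ℝ) (hu : (Rᵀ *ᵥ u) j = 0) : u a = u b := by
  obtain ⟨a', b', hab', ha', hb', h0'⟩ := hR j
  have haa : a = a' := by
    by_contra hcon
    by_cases h2 : a = b'
    · subst h2; rw [hb'] at ha; norm_num at ha
    · rw [h0' a hcon h2] at ha; norm_num at ha
  have hbb : b = b' := by
    by_contra hcon
    by_cases h2 : b = a'
    · subst h2; rw [ha'] at hb; norm_num at hb
    · rw [h0' b h2 hcon] at hb; norm_num at hb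
  subst haa; subst hbb
  rw [transpose_mulVec_apply, sum_R_mul R hab' ha' hb' h0'] at hu
  linarith

end Aux

section Main

variable {n m : ℕ} (R : Matrix (Fin n) (Fin m) ℝ)

noncomputable def eVec (n m : ℕ) : Fin n ⊕ Fin m → ℝ :=
  Sum.elim (fun _ => (1 : ℝ)) (fun _ => (0 : ℝ))

lemma diag_inv {p : ℕ} (g : Fin p → ℝ) (hg : ∀ i, 0 < g i) :
    (Matrix.diagonal g)⁻¹ = Matrix.diagonal (fun i => (g i)⁻¹) := by
  apply Matrix.inv_eq_right_inv
  rw [Matrix.diagonal_mul_diagonal,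
    show (fun i => g i * (g i)⁻¹) = (1 : Fin p → ℝ) from
      funext fun i => mul_inv_cancel₀ (hg i).ne']
  exact Matrix.diagonal_one

theorem kerA {n m : ℕ} (R : Matrix (Fin n) (Fin m) ℝ)
    (hR : IsIncidence R) (hconn : (IncidenceGraph R).Connected)
    (g : Fin n → ℝ) (h : Fin m → ℝ) (d : Fin m → ℝ)
    (hg : ∀ i, 0 < g i) (hh : ∀ l, 0 < h l) (hd : ∀ l, 0 < d l)
    (A : Matrix (Fin n ⊕ Fin m) (Fin n ⊕ Fin m) ℝ)
    (hA : A = Matrix.fromBlocks (0 : Matrix (Fin n) (Fin n) ℝ)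
        (-((Matrix.diagonal g)⁻¹ * R))
        ((Matrix.diagonal h)⁻¹ * R.transpose)
        (-((Matrix.diagonal h)⁻¹ * Matrix.diagonal d))) :
    LinearMap.ker A.mulVecLin = Submodule.span ℝ {eVec n m} := by
  subst hA
  rw [diag_inv g hg, diag_inv h hh]
  apply le_antisymm
  · intro x hx
    rw [LinearMap.mem_ker, Matrix.mulVecLin_apply, Matrix.fromBlocks_mulVec] at hx
    set u : Fin n → ℝ := x ∘ Sum.inl with hu_def
    set w : Fin m → ℝ := x ∘ Sum.inr with hw_def
    -- first block equation: R *ᵥ w = 0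
    have hRw : R *ᵥ w = 0 := by
      funext i
      have e1 := congrFun hx (Sum.inl i)
      simp only [Sum.elim_inl, Matrix.zero_mulVec, Matrix.neg_mulVec, zero_add,
        Pi.add_apply, Pi.neg_apply, Pi.zero_apply, ← Matrix.mulVec_mulVec,
        Matrix.mulVec_diagonal] at e1
      have := (hg i).ne'
      have h2 : (g i)⁻¹ ≠ 0 := inv_ne_zero this
      field_simp at e1
      simpa using e1
    -- second block equation
    have hRTu : ∀ l, (Rᵀ *ᵥ u) l = d l * w l := by
      intro l
      have e2 := congrFun hx (Sum.inr l)
      simp only [Sum.elim_inr, Matrix.neg_mulVec, Pi.add_apply, Pi.neg_apply,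
        Pi.zero_apply, ← Matrix.mulVec_mulVec, Matrix.mulVec_diagonal] at e2
      have h2 : (h l)⁻¹ ≠ 0 := inv_ne_zero (hh l).ne'
      have e3 : (h l)⁻¹ * (Rᵀ *ᵥ u) l = (h l)⁻¹ * (d l * w l) := by linarith
      exact mul_left_cancel₀ h2 e3
    -- w = 0
    have hw0 : w = 0 := by
      have hdot : ∑ l, d l * w l * w l = 0 := by
        have h1 : (Rᵀ *ᵥ u) ⬝ᵥ w = u ⬝ᵥ (R *ᵥ w) := by
          rw [Matrix.mulVec_transpose, ← Matrix.dotProduct_mulVec]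
        rw [hRw, dotProduct_zero] at h1
        calc ∑ l, d l * w l * w l = ∑ l, (Rᵀ *ᵥ u) l * w l := by
              refine Finset.sum_congr rfl fun l _ => ?_; rw [hRTu l]
          _ = (Rᵀ *ᵥ u) ⬝ᵥ w := rfl
          _ = 0 := h1
      funext l
      have hnn : ∀ l ∈ Finset.univ, 0 ≤ d l * w l * w l := by
        intro l _
        rw [mul_assoc]
        exact mul_nonneg (hd l).le (mul_self_nonneg _)
      have := (Finset.sum_eq_zero_iff_of_nonneg hnn).mp hdot l (Finset.mem_univ l)
      rw [mul_assoc] at this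
      rcases mul_eq_zero.mp this with h4 | h4
      · exact absurd h4 (hd l).ne'
      · exact mul_self_eq_zero.mp h4
    -- u is constant
    have hRTu0 : ∀ l, (Rᵀ *ᵥ u) l = 0 := by
      intro l; rw [hRTu l, hw0]; simp
    have hadj : ∀ a b : Fin n, (IncidenceGraph R).Adj a b → u a = u b := by
      intro a b hab
      rw [IncidenceGraph, SimpleGraph.fromRel_adj] at hab
      obtain ⟨hne, ⟨j, ha, hb⟩ | ⟨j, ha, hb⟩⟩ := hab
      · exact edge_eq R hR ha hb u (hRTu0 j)
      · exact (edge_eq R hR ha hb u (hRTu0 j)).symm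
    have hconst : ∀ v v' : Fin n, u v = u v' := by
      intro v v'
      obtain ⟨p⟩ := hconn.preconnected v v'
      induction p with
      | nil => rfl
      | cons hadj' p ih => exact (hadj _ _ hadj').trans ih
    obtain ⟨v0⟩ := hconn.nonempty
    rw [Submodule.mem_span_singleton]
    refine ⟨u v0, ?_⟩
    funext i
    cases i with
    | inl i => simpa [eVec, hu_def] using hconst v0 i
    | inr l => simpa [eVec, hw_def] using (congrFun hw0 l).symm
  · rw [Submodule.span_singleton_le_iff_mem, LinearMap.mem_ker, Matrix.mulVecLin_apply]
    have h1 : (eVec n m) ∘ Sum.inl = fun _ => (1:ℝ) := rfl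
    have h2 : (eVec n m) ∘ Sum.inr = (0 : Fin m → ℝ) := rfl
    rw [Matrix.fromBlocks_mulVec, h1, h2]
    funext i
    cases i with
    | inl i => simp
    | inr l =>
      simp only [Sum.elim_inr, Matrix.mulVec_zero, Matrix.neg_mulVec, neg_zero, add_zero,
        ← Matrix.mulVec_mulVec, Matrix.mulVec_diagonal, Pi.zero_apply]
      rw [col_sum R hR l, mul_zero]

end Main

/-- For every `k ≥ 1`, `Ker(Aᵏ) = {(c𝟙, 0) : c ∈ ℝ}`: the generalized
eigenspace of `A` for the eigenvalue `0` is one-dimensional, spanned by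
`(𝟙, 0)`. -/
theorem ker_pow_eq_span_linearization {n m : ℕ} (R : Matrix (Fin n) (Fin m) ℝ)
    (hR : IsIncidence R) (hconn : (IncidenceGraph R).Connected)
    (g : Fin n → ℝ) (h : Fin m → ℝ) (d : Fin m → ℝ)
    (hg : ∀ i, 0 < g i) (hh : ∀ l, 0 < h l) (hd : ∀ l, 0 < d l)
    (A : Matrix (Fin n ⊕ Fin m) (Fin n ⊕ Fin m) ℝ)
    (hA : A = Matrix.fromBlocks (0 : Matrix (Fin n) (Fin n) ℝ)
        (-((Matrix.diagonal g)⁻¹ * R))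
        ((Matrix.diagonal h)⁻¹ * R.transpose)
        (-((Matrix.diagonal h)⁻¹ * Matrix.diagonal d))) :
    ∀ k : ℕ, 1 ≤ k →
      LinearMap.ker (A ^ k).mulVecLin
        = Submodule.span ℝ
            {(Sum.elim (fun _ => (1 : ℝ)) (fun _ => (0 : ℝ)) : Fin n ⊕ Fin m → ℝ)} := by
  have hker := kerA R hR hconn g h d hg hh hd A hA
  -- A²x = 0 → Ax = 0
  have hA2 : ∀ x, A *ᵥ (A *ᵥ x) = 0 → A *ᵥ x = 0 := by
    intro x hx
    have hmem : A *ᵥ x ∈ LinearMap.ker A.mulVecLin := by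
      rw [LinearMap.mem_ker, Matrix.mulVecLin_apply]; exact hx
    rw [hker, Submodule.mem_span_singleton] at hmem
    obtain ⟨c, hc⟩ := hmem
    -- compute components of A *ᵥ x
    have hc0 : c = 0 := by
      set w : Fin m → ℝ := x ∘ Sum.inr with hw_def
      have hRw : ∀ i, (R *ᵥ w) i = -c * g i := by
        intro i
        have e1 := congrFun hc (Sum.inl i)
        rw [hA] at e1
        simp only [Matrix.fromBlocks_mulVec, Sum.elim_inl, Matrix.zero_mulVec, zero_add,
          Matrix.neg_mulVec, Pi.smul_apply, Pi.neg_apply, eVec, smul_eq_mul, mul_one,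
          ← Matrix.mulVec_mulVec, diag_inv g hg, Matrix.mulVec_diagonal] at e1
        have hgne : g i ≠ 0 := (hg i).ne'
        field_simp at e1 ⊢
        linarith [e1]
      have hsum0 : ∑ i, (R *ᵥ w) i = 0 := by
        have h1 : (fun _ => (1:ℝ)) ⬝ᵥ (R *ᵥ w) = ((fun _ => (1:ℝ)) ᵥ* R) ⬝ᵥ w :=
          Matrix.dotProduct_mulVec _ _ _
        have h2 : ((fun _ => (1:ℝ)) ᵥ* R) = 0 := by
          funext j
          have := col_sum R hR j
          rw [Matrix.mulVec_transpose] at this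
          exact this
        rw [h2, zero_dotProduct] at h1
        simpa [dotProduct] using h1
      rw [Finset.sum_congr rfl fun i _ => hRw i] at hsum0
      have hgsum : 0 < ∑ i, g i := by
        obtain ⟨v0⟩ := hconn.nonempty
        exact Finset.sum_pos (fun i _ => hg i) ⟨v0, Finset.mem_univ v0⟩
      have : -c * ∑ i, g i = 0 := by rw [Finset.mul_sum]; exact hsum0
      rcases mul_eq_zero.mp this with h4 | h4
      · linarith
      · exact absurd h4 hgsum.ne'
    rw [hc0, zero_smul] at hc
    exact hc.symm
  -- kernel stabilizes
  have hpow : ∀ k : ℕ, 1 ≤ k → ∀ x, (A ^ k) *ᵥ x = 0 ↔ A *ᵥ x = 0 := by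
    intro k hk
    induction k, hk using Nat.le_induction with
    | base => intro x; rw [pow_one]
    | succ k hk ih =>
      intro x
      rw [pow_succ, ← Matrix.mulVec_mulVec]
      constructor
      · intro hx
        exact hA2 x (((ih (A *ᵥ x)).mp hx))
      · intro hx
        rw [hx, Matrix.mulVec_zero]
  intro k hk
  ext x
  rw [LinearMap.mem_ker, Matrix.mulVecLin_apply, hpow k hk x, ← Matrix.mulVecLin_apply,
    ← LinearMap.mem_ker, hker]
  rfl
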